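/- DP recursion correctness for SVP: for 1 ≤ t ≤ n, the lexicographic optimum R_t of the SVP problem on y[0..t] satisfies R_t = min_⪯ { R_s + (1, C(y[s..t])) : 0 ≤ s < t, f(y[s..t]) ≤ γ }, with R_0 = (0,0). -/

import Mathlib

/-- The lexicographic order on ℕ × ℝ. -/
def lexLE (p q : ℕ × ℝ) : Prop := p.1 < q.1 ∨ (p.1 = q.1 ∧ p.2 ≤ q.2)

/-- p is a least element of S for the lexicographic order
(the minimum of an empty set does not exist, i.e. is +∞). -/
def IsLexLeast (S : Set (ℕ × ℝ)) (p : ℕ × ℝ) : Prop := p ∈ S ∧ ∀ q ∈ S, lexLE p q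

/-- A valid segmentation 0 = τ₀ < … < τ_K = t, all segments passing f ≤ γ. -/
def ValidSeg (f : ℕ → ℕ → ℝ) (γ : ℝ) (t K : ℕ) (τ : ℕ → ℕ) : Prop :=
  τ 0 = 0 ∧ τ K = t ∧ (∀ k < K, τ k < τ (k + 1)) ∧ (∀ k < K, f (τ k) (τ (k + 1)) ≤ γ)

/-- The set of objective values (K, Σ_k C(y[τ_k..τ_{k+1}])) over valid segmentations of y[0..t]. -/
def SVPvals (C f : ℕ → ℕ → ℝ) (γ : ℝ) (t : ℕ) : Set (ℕ × ℝ) :=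
  {p | ∃ K τ, ValidSeg f γ t K τ ∧ p = (K, ∑ k ∈ Finset.range K, C (τ k) (τ (k + 1)))}

lemma lexLE_iff (p q : ℕ × ℝ) : lexLE p q ↔ toLex p ≤ toLex q := by rw [Prod.Lex.le_iff]; rfl

lemma lexLE_trans {p q r : ℕ × ℝ} (h1 : lexLE p q) (h2 : lexLE q r) : lexLE p r := by
  rw [lexLE_iff] at *; exact le_trans h1 h2

lemma lexLE_antisymm {p q : ℕ × ℝ} (h1 : lexLE p q) (h2 : lexLE q p) : p = q := by
  rw [lexLE_iff] at *
  have := le_antisymm h1 h2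
  exact congrArg (⇑ofLex) this

lemma lexLE_add {q r : ℕ × ℝ} (c : ℝ) (h : lexLE q r) :
    lexLE (q.1 + 1, q.2 + c) (r.1 + 1, r.2 + c) := by
  rcases h with h | ⟨h, h'⟩
  · exact Or.inl (by simpa using h)
  · exact Or.inr ⟨by simp [h], by simpa using h'⟩

lemma tau_mono {f : ℕ → ℕ → ℝ} {γ : ℝ} {t K : ℕ} {τ : ℕ → ℕ}
    (hv : ValidSeg f γ t K τ) {k m : ℕ} (hk : k ≤ m) (hm : m ≤ K) : τ k ≤ τ m := by
  induction m with
  | zero =>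
      have hk0 : k = 0 := by omega
      simp [hk0]
  | succ n ih =>
      rcases Nat.eq_or_lt_of_le hk with h | h
      · exact h ▸ le_refl _
      · exact le_trans (ih (by omega) (by omega)) (le_of_lt (hv.2.2.1 n (by omega)))

lemma tau_ge {f : ℕ → ℕ → ℝ} {γ : ℝ} {t K : ℕ} {τ : ℕ → ℕ}
    (hv : ValidSeg f γ t K τ) {k : ℕ} (hk : k ≤ K) : k ≤ τ k := by
  induction k with
  | zero => omega
  | succ n ih =>
      have := hv.2.2.1 n (by omega)
      have := ih (by omega)
      omega

lemma SVPvals_finite (C f : ℕ → ℕ → ℝ) (γ : ℝ) (t : ℕ) : (SVPvals C f γ t).Finite := by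
  have : SVPvals C f γ t ⊆ Set.range (fun Kσ : Fin (t + 1) × (Fin (t + 1) → Fin (t + 1)) =>
      ((Kσ.1 : ℕ), ∑ k ∈ Finset.range Kσ.1, C (Kσ.2 ⟨min k t, by omega⟩) (Kσ.2 ⟨min (k+1) t, by omega⟩))) := by
    rintro p ⟨K, τ, hv, rfl⟩
    have hKt : K ≤ t := by
      have h1 := tau_ge hv (le_refl K)
      have h2 := hv.2.1
      omega
    have htk : ∀ k ≤ K, τ k ≤ t := by
      intro k hk
      have := tau_mono hv hk (le_refl K)
      have h2 := hv.2.1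
      omega
    refine ⟨⟨⟨K, by omega⟩, fun i => ⟨min (τ i) t, by omega⟩⟩, ?_⟩
    simp only
    refine Prod.ext rfl ?_
    simp only
    apply Finset.sum_congr rfl
    intro k hk
    simp only [Finset.mem_range] at hk
    have h1 : min k t = k := by omega
    have h2 : min (k+1) t = k + 1 := by omega
    have h3 : min (τ k) t = τ k := by have := htk k (by omega); omega
    have h4 : min (τ (k+1)) t = τ (k+1) := by have := htk (k+1) (by omega); omega
    congr 1 <;> simp [h1, h2, h3, h4]
  exact Set.Finite.subset (Set.finite_range _) this

lemma SVPvals_exists_least {C f : ℕ → ℕ → ℝ} {γ : ℝ} {t : ℕ}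
    (h : (SVPvals C f γ t).Nonempty) : ∃ p, IsLexLeast (SVPvals C f γ t) p := by
  obtain ⟨a, ha, hmin⟩ := Set.exists_min_image (SVPvals C f γ t) (toLex : ℕ × ℝ → ℕ ×ₗ ℝ)
    (SVPvals_finite C f γ t) h
  exact ⟨a, ha, fun q hq => (lexLE_iff a q).mpr (hmin q hq)⟩

lemma mem_extend {C f : ℕ → ℕ → ℝ} {γ : ℝ} {s t : ℕ} {q : ℕ × ℝ}
    (hq : q ∈ SVPvals C f γ s) (hst : s < t) (hf : f s t ≤ γ) :
    (q.1 + 1, q.2 + C s t) ∈ SVPvals C f γ t := by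
  obtain ⟨K, τ, hv, rfl⟩ := hq
  refine ⟨K + 1, fun k => if k ≤ K then τ k else t, ?_, ?_⟩
  · refine ⟨by simp [hv.1], by simp, ?_, ?_⟩
    · intro k hk
      rcases Nat.lt_or_ge k K with h | h
      · simpa [Nat.le_of_lt h, Nat.succ_le_of_lt h] using hv.2.2.1 k h
      · have hkK : k = K := by omega
        subst hkK
        simp [hv.2.1, hst]
    · intro k hk
      rcases Nat.lt_or_ge k K with h | h
      · simpa [Nat.le_of_lt h, Nat.succ_le_of_lt h] using hv.2.2.2 k h
      · have hkK : k = K := by omega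
        subst hkK
        simpa [hv.2.1] using hf
  · simp only
    rw [Finset.sum_range_succ]
    refine Prod.ext rfl ?_
    simp only
    congr 1
    · apply Finset.sum_congr rfl
      intro k hk
      simp only [Finset.mem_range] at hk
      simp [Nat.le_of_lt hk, Nat.succ_le_of_lt hk]
    · simp [hv.2.1]

lemma mem_decompose {C f : ℕ → ℕ → ℝ} {γ : ℝ} {t : ℕ} (ht : 1 ≤ t) {p : ℕ × ℝ}
    (hp : p ∈ SVPvals C f γ t) :
    ∃ s < t, f s t ≤ γ ∧ ∃ q ∈ SVPvals C f γ s, p = (q.1 + 1, q.2 + C s t) := by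
  obtain ⟨K, τ, hv, rfl⟩ := hp
  have hK : K ≠ 0 := by
    rintro rfl
    have := hv.1
    have := hv.2.1
    omega
  obtain ⟨K', rfl⟩ : ∃ K', K = K' + 1 := ⟨K - 1, by omega⟩
  refine ⟨τ K', ?_, ?_, (K', ∑ k ∈ Finset.range K', C (τ k) (τ (k+1))), ?_, ?_⟩
  · have := hv.2.2.1 K' (by omega)
    have := hv.2.1
    omega
  · have := hv.2.2.2 K' (by omega)
    rwa [hv.2.1] at this
  · exact ⟨K', τ, ⟨hv.1, rfl, fun k hk => hv.2.2.1 k (by omega),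
      fun k hk => hv.2.2.2 k (by omega)⟩, rfl⟩
  · simp [Finset.sum_range_succ, hv.2.1]

/-- DP recursion correctness for SVP: for 1 ≤ t, R_t is the lexicographic optimum of
the SVP problem on y[0..t] iff it is the lexicographic minimum of
{ R_s + (1, C(y[s..t])) : 0 ≤ s < t, f(y[s..t]) ≤ γ }, where R_s is the lexicographic
optimum at s (terms with no optimum, i.e. R_s = +∞, contribute nothing); note
R_0 = (0,0) since SVPvals at 0 is {(0,0)}. -/
theorem stmt_11 (C f : ℕ → ℕ → ℝ) (γ : ℝ) (t : ℕ) (ht : 1 ≤ t) (p : ℕ × ℝ) :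
    IsLexLeast (SVPvals C f γ t) p ↔
      IsLexLeast {r | ∃ s < t, f s t ≤ γ ∧
        ∃ q, IsLexLeast (SVPvals C f γ s) q ∧ r = (q.1 + 1, q.2 + C s t)} p := by
  constructor
  · rintro ⟨hp, hmin⟩
    obtain ⟨s, hst, hf, r, hr, hpr⟩ := mem_decompose ht hp
    obtain ⟨q, hq⟩ := SVPvals_exists_least ⟨r, hr⟩
    have h1 : lexLE p (q.1 + 1, q.2 + C s t) := hmin _ (mem_extend hq.1 hst hf)
    have h2 : lexLE (q.1 + 1, q.2 + C s t) p := by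
      rw [hpr]; exact lexLE_add _ (hq.2 r hr)
    have hpe := lexLE_antisymm h1 h2
    constructor
    · exact ⟨s, hst, hf, q, hq, hpe⟩
    · rintro x ⟨s', hs', hf', q', hq', rfl⟩
      exact hmin _ (mem_extend hq'.1 hs' hf')
  · rintro ⟨hp, hmin⟩
    obtain ⟨s, hst, hf, q, hq, rfl⟩ := hp
    constructor
    · exact mem_extend hq.1 hst hf
    · intro a ha
      obtain ⟨s', hs', hf', r, hr, rfl⟩ := mem_decompose ht ha
      obtain ⟨q', hq'⟩ := SVPvals_exists_least ⟨r, hr⟩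
      have h1 : lexLE (q.1 + 1, q.2 + C s t) (q'.1 + 1, q'.2 + C s' t) :=
        hmin _ ⟨s', hs', hf', q', hq', rfl⟩
      exact lexLE_trans h1 (lexLE_add _ (hq'.2 r hr))
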